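/- Suppose the stochastic kernel P(dx′|x,a) on X given X×A and the stochastic kernel Q(dy|a,x) on Y given A×X are weakly continuous, and H is a stochastic kernel on X given P(X)×A×Y satisfying the disintegration identity (3.4) that is weakly continuous, i.e. the map (z,a,y) ↦ H(·|z,a,y) from P(X)×A×Y to P(X) is continuous. Then the stochastic kernel q on P(X) given P(X)×A, defined by q(D|z,a) = ∫_Y 1{H(z,a,y) ∈ D} R′(dy|z,a) for Borel D ⊆ P(X), is weakly continuous. -/

import Mathlib

open MeasureTheory Filter Topology
open scoped ENNReal NNReal

/-- The joint kernel `R(B×C|z,a) = ∫_X ∫_B Q(C|a,x') P(dx'|x,a) z(dx)` of formula (3.3). -/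
noncomputable def Rfun {X Y A : Type*} [MeasurableSpace X] [MeasurableSpace Y]
    (P : X × A → ProbabilityMeasure X) (Q : A × X → ProbabilityMeasure Y)
    (z : ProbabilityMeasure X) (a : A) (B : Set X) (C : Set Y) : ℝ≥0∞ :=
  ∫⁻ x, (∫⁻ x' in B, ((Q (a, x') : Measure Y) C) ∂((P (x, a) : Measure X))) ∂(z : Measure X)

/-- The marginal observation kernel `R'(dy|z,a)` on `Y` given `P(X)×A`, as a measure. -/
noncomputable def RprimeM {X Y A : Type*} [MeasurableSpace X] [MeasurableSpace Y]
    (P : X × A → ProbabilityMeasure X) (Q : A × X → ProbabilityMeasure Y)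
    (z : ProbabilityMeasure X) (a : A) : Measure Y :=
  ((z : Measure X).bind fun x => (P (x, a) : Measure X)).bind fun x' => (Q (a, x') : Measure Y)

/-- The disintegration identity (3.4). -/
def Disint {X Y A : Type*} [MeasurableSpace X] [MeasurableSpace Y]
    (P : X × A → ProbabilityMeasure X) (Q : A × X → ProbabilityMeasure Y)
    (H : ProbabilityMeasure X × A × Y → ProbabilityMeasure X) : Prop :=
  ∀ (z : ProbabilityMeasure X) (a : A) (B : Set X) (C : Set Y),
    MeasurableSet B → MeasurableSet C →
      Rfun P Q z a B C = ∫⁻ y in C, ((H (z, a, y) : Measure X) B) ∂(RprimeM P Q z a)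

/-- The Borel σ-algebra of the weak topology on `P(X)`. -/
noncomputable instance probabilityMeasureMeasurableSpace {X : Type*}
    [MeasurableSpace X] [TopologicalSpace X] [OpensMeasurableSpace X] :
    MeasurableSpace (ProbabilityMeasure X) := borel _

/-- The transition kernel `q(D|z,a) = ∫_Y 1{H(z,a,y) ∈ D} R'(dy|z,a)` of the COMDP. -/
noncomputable def qker {X Y A : Type*}
    [MeasurableSpace X] [TopologicalSpace X] [OpensMeasurableSpace X] [MeasurableSpace Y]
    (P : X × A → ProbabilityMeasure X) (Q : A × X → ProbabilityMeasure Y)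
    (H : ProbabilityMeasure X × A × Y → ProbabilityMeasure X)
    (z : ProbabilityMeasure X) (a : A) : Measure (ProbabilityMeasure X) :=
  (RprimeM P Q z a).map fun y => H (z, a, y)

section AuxLemmas

variable {W Y : Type*}

/-- Coercion `ℝ≥0 → ℝ≥0∞` commutes with `liminf` of a bounded sequence. -/
lemma auxCoeLiminf {xs : ℕ → ℝ≥0} (hb : ∀ n, xs n ≤ 1) :
    ((atTop.liminf xs : ℝ≥0) : ℝ≥0∞) = atTop.liminf (fun n => (xs n : ℝ≥0∞)) := by
  refine Monotone.map_liminf_of_continuousAt (F := atTop) ENNReal.coe_mono xs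
    ENNReal.continuous_coe.continuousAt ?_ ?_
  · exact IsBoundedUnder.isCoboundedUnder_ge ⟨1, eventually_map.mpr (Eventually.of_forall hb)⟩
  · exact ⟨0, eventually_map.mpr (Eventually.of_forall fun n => zero_le)⟩

/-- Key lemma: if `μsₙ → μ` weakly and `wsₙ → w`, then the "couplings with a Dirac"
`δ_{wsₙ} ⊗ μsₙ` converge weakly to `δ_w ⊗ μ` on `W × Y`. -/
lemma tendsto_map_pair
    [TopologicalSpace W] [FirstCountableTopology W] [MeasurableSpace W] [OpensMeasurableSpace W]
    [PseudoMetricSpace Y] [SecondCountableTopology Y] [MeasurableSpace Y] [OpensMeasurableSpace Y]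
    {μs : ℕ → ProbabilityMeasure Y} {μ : ProbabilityMeasure Y} (hμ : Tendsto μs atTop (𝓝 μ))
    {ws : ℕ → W} {w : W} (hw : Tendsto ws atTop (𝓝 w)) :
    Tendsto (fun n => (μs n).map (f := fun y => (ws n, y)) measurable_prodMk_left.aemeasurable)
      atTop (𝓝 (μ.map (f := fun y => (w, y)) measurable_prodMk_left.aemeasurable)) := by
  apply MeasureTheory.tendsto_of_forall_isOpen_le_liminf
  intro G hG
  obtain ⟨N, hN⟩ := (𝓝 w).exists_antitone_basis
  set U : ℕ → Set Y :=
    fun k => {y | ∃ ε > 0, ∀ w' ∈ N k, ∀ y' ∈ Metric.ball y ε, (w', y') ∈ G} with hU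
  have hUopen : ∀ k, IsOpen (U k) := by
    intro k
    rw [Metric.isOpen_iff]
    rintro y ⟨ε, hε, hy⟩
    refine ⟨ε / 2, half_pos hε, ?_⟩
    intro y'' hy''
    refine ⟨ε / 2, half_pos hε, fun w' hw' y' hy' => hy w' hw' y' ?_⟩
    rw [Metric.mem_ball] at *
    have h3 : dist y' y ≤ dist y' y'' + dist y'' y := dist_triangle _ _ _
    linarith
  have hUmono : Monotone U := by
    intro k l hkl y hy
    obtain ⟨ε, hε, hy⟩ := hy
    exact ⟨ε, hε, fun w' hw' => hy w' (hN.antitone hkl hw')⟩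
  have hNmem : ∀ k, N k ∈ 𝓝 w := fun k => hN.toHasBasis.mem_of_mem trivial
  have hUnion : {y | (w, y) ∈ G} = ⋃ k, U k := by
    ext y
    constructor
    · intro hyG
      have hGnhds : G ∈ 𝓝 (w, y) := hG.mem_nhds hyG
      rw [nhds_prod_eq] at hGnhds
      obtain ⟨V, hV, T, hT, hsub⟩ := Filter.mem_prod_iff.mp hGnhds
      obtain ⟨ε, hε, hball⟩ := Metric.mem_nhds_iff.mp hT
      obtain ⟨k, -, hk⟩ := hN.toHasBasis.mem_iff.mp hV
      exact Set.mem_iUnion.mpr ⟨k, ε, hε, fun w' hw' y' hy' => hsub ⟨hk hw', hball hy'⟩⟩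
    · intro hy
      obtain ⟨k, ε, hε, hy⟩ := Set.mem_iUnion.mp hy
      exact hy w (mem_of_mem_nhds (hNmem k)) y (Metric.mem_ball_self hε)
  have hmapμ :
      ((μ.map (f := fun y => (w, y)) measurable_prodMk_left.aemeasurable :
        ProbabilityMeasure (W × Y)) : Measure (W × Y)) G
        = (μ : Measure Y) {y | (w, y) ∈ G} := by
    rw [ProbabilityMeasure.toMeasure_map, Measure.map_apply measurable_prodMk_left
      hG.measurableSet]
    rfl
  have hmapμs : ∀ n,
      (((μs n).map (f := fun y => (ws n, y)) measurable_prodMk_left.aemeasurable :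
        ProbabilityMeasure (W × Y)) : Measure (W × Y)) G
        = (μs n : Measure Y) {y | (ws n, y) ∈ G} := by
    intro n
    rw [ProbabilityMeasure.toMeasure_map, Measure.map_apply measurable_prodMk_left
      hG.measurableSet]
    rfl
  have keyE : (μ : Measure Y) {y | (w, y) ∈ G}
      ≤ atTop.liminf (fun n => (μs n : Measure Y) {y | (ws n, y) ∈ G}) := by
    rw [hUnion, (hUmono.directed_le).measure_iUnion]
    refine iSup_le fun k => ?_
    have h1 : (μ : Measure Y) (U k) ≤ atTop.liminf (fun n => (μs n : Measure Y) (U k)) :=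
      ProbabilityMeasure.le_liminf_measure_open_of_tendsto hμ (hUopen k)
    refine h1.trans (Filter.liminf_le_liminf ?_)
    filter_upwards [hw.eventually (hNmem k)] with n hn
    refine measure_mono fun y hy => ?_
    obtain ⟨ε, hε, hy⟩ := hy
    exact hy (ws n) hn y (Metric.mem_ball_self hε)
  have goalE :
      ((μ.map (f := fun y => (w, y)) measurable_prodMk_left.aemeasurable :
        ProbabilityMeasure (W × Y)) : Measure (W × Y)) G
        ≤ atTop.liminf fun n =>
          (((μs n).map (f := fun y => (ws n, y)) measurable_prodMk_left.aemeasurable :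
            ProbabilityMeasure (W × Y)) : Measure (W × Y)) G := by
    rw [hmapμ]
    refine keyE.trans (le_of_eq ?_)
    congr 1
    funext n
    exact (hmapμs n).symm
  rw [← ENNReal.coe_le_coe, ProbabilityMeasure.ennreal_coeFn_eq_coeFn_toMeasure,
    auxCoeLiminf (fun n => ProbabilityMeasure.apply_le_one _ _)]
  simpa only [ProbabilityMeasure.ennreal_coeFn_eq_coeFn_toMeasure] using goalE

/-- `ℝ≥0∞`-integral form of the key lemma. -/
lemma tendsto_lintegral_pair
    [TopologicalSpace W] [FirstCountableTopology W] [MeasurableSpace W] [OpensMeasurableSpace W]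
    [PseudoMetricSpace Y] [SecondCountableTopology Y] [MeasurableSpace Y] [OpensMeasurableSpace Y]
    {μs : ℕ → ProbabilityMeasure Y} {μ : ProbabilityMeasure Y} (hμ : Tendsto μs atTop (𝓝 μ))
    {ws : ℕ → W} {w : W} (hw : Tendsto ws atTop (𝓝 w))
    (g : BoundedContinuousFunction (W × Y) ℝ≥0) :
    Tendsto (fun n => ∫⁻ y, g (ws n, y) ∂(μs n : Measure Y)) atTop
      (𝓝 (∫⁻ y, g (w, y) ∂(μ : Measure Y))) := by
  have h := ProbabilityMeasure.tendsto_iff_forall_lintegral_tendsto.mp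
    (tendsto_map_pair hμ hw) g
  have hg : Measurable fun p : W × Y => (g p : ℝ≥0∞) :=
    measurable_coe_nnreal_ennreal.comp g.continuous.measurable
  have e0 : (∫⁻ p, g p ∂((μ.map (f := fun y => (w, y))
      measurable_prodMk_left.aemeasurable : ProbabilityMeasure (W × Y)) : Measure (W × Y)))
        = ∫⁻ y, g (w, y) ∂(μ : Measure Y) := by
    rw [ProbabilityMeasure.toMeasure_map, lintegral_map hg measurable_prodMk_left]
  have e1 : ∀ n, (∫⁻ p, g p ∂(((μs n).map (f := fun y => (ws n, y))
      measurable_prodMk_left.aemeasurable : ProbabilityMeasure (W × Y)) : Measure (W × Y)))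
        = ∫⁻ y, g (ws n, y) ∂(μs n : Measure Y) := fun n => by
    rw [ProbabilityMeasure.toMeasure_map, lintegral_map hg measurable_prodMk_left]
  rw [e0] at h
  exact h.congr e1

/-- `ℝ`-integral form of the key lemma. -/
lemma tendsto_integral_pair
    [TopologicalSpace W] [FirstCountableTopology W] [MeasurableSpace W] [OpensMeasurableSpace W]
    [PseudoMetricSpace Y] [SecondCountableTopology Y] [MeasurableSpace Y] [OpensMeasurableSpace Y]
    {μs : ℕ → ProbabilityMeasure Y} {μ : ProbabilityMeasure Y} (hμ : Tendsto μs atTop (𝓝 μ))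
    {ws : ℕ → W} {w : W} (hw : Tendsto ws atTop (𝓝 w))
    (g : BoundedContinuousFunction (W × Y) ℝ) :
    Tendsto (fun n => ∫ y, g (ws n, y) ∂(μs n : Measure Y)) atTop
      (𝓝 (∫ y, g (w, y) ∂(μ : Measure Y))) := by
  have h := ProbabilityMeasure.tendsto_iff_forall_integral_tendsto.mp
    (tendsto_map_pair hμ hw) g
  have e0 : (∫ p, g p ∂((μ.map (f := fun y => (w, y))
      measurable_prodMk_left.aemeasurable : ProbabilityMeasure (W × Y)) : Measure (W × Y)))
        = ∫ y, g (w, y) ∂(μ : Measure Y) := by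
    rw [ProbabilityMeasure.toMeasure_map]
    exact integral_map measurable_prodMk_left.aemeasurable g.continuous.aestronglyMeasurable
  have e1 : ∀ n, (∫ p, g p ∂(((μs n).map (f := fun y => (ws n, y))
      measurable_prodMk_left.aemeasurable : ProbabilityMeasure (W × Y)) : Measure (W × Y)))
        = ∫ y, g (ws n, y) ∂(μs n : Measure Y) := fun n => by
    rw [ProbabilityMeasure.toMeasure_map]
    exact integral_map measurable_prodMk_left.aemeasurable g.continuous.aestronglyMeasurable
  rw [e0] at h
  exact h.congr e1

/-- Binding a probability measure along a measurable probability kernel gives a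
probability measure. -/
lemma isProbabilityMeasure_bind {α β : Type*} [MeasurableSpace α] [MeasurableSpace β]
    (m : Measure α) [IsProbabilityMeasure m] (k : α → Measure β) (hk : Measurable k)
    (h : ∀ x, IsProbabilityMeasure (k x)) : IsProbabilityMeasure (m.bind k) := by
  constructor
  rw [Measure.bind_apply MeasurableSet.univ hk.aemeasurable]
  have huniv : ∀ x, k x Set.univ = 1 := fun x => (h x).measure_univ
  simp [huniv]

/-- `bind` of probability measures, packaged as a probability measure. -/
noncomputable def pbind {S T : Type*} [MeasurableSpace S] [MeasurableSpace T]
    (μ : ProbabilityMeasure S) (k : S → ProbabilityMeasure T)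
    (hk : Measurable fun x => (k x : Measure T)) : ProbabilityMeasure T :=
  ⟨(μ : Measure S).bind (fun x => (k x : Measure T)),
    isProbabilityMeasure_bind _ _ hk fun x => (k x).2⟩

/-- Weak continuity of `bind` along a jointly weakly continuous kernel. -/
lemma tendsto_pbind {W S T : Type*}
    [TopologicalSpace W] [FirstCountableTopology W] [MeasurableSpace W] [OpensMeasurableSpace W]
    [PseudoMetricSpace S] [SecondCountableTopology S] [MeasurableSpace S] [OpensMeasurableSpace S]
    [TopologicalSpace T] [MeasurableSpace T] [OpensMeasurableSpace T]
    (κ : W × S → ProbabilityMeasure T) (hκc : Continuous κ)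
    (hκm : Measurable fun p => (κ p : Measure T))
    {μs : ℕ → ProbabilityMeasure S} {μ : ProbabilityMeasure S} (hμ : Tendsto μs atTop (𝓝 μ))
    {ws : ℕ → W} {w : W} (hw : Tendsto ws atTop (𝓝 w)) :
    Tendsto (fun n => pbind (μs n) (fun x => κ (ws n, x)) (hκm.comp measurable_prodMk_left))
      atTop (𝓝 (pbind μ (fun x => κ (w, x)) (hκm.comp measurable_prodMk_left))) := by
  rw [ProbabilityMeasure.tendsto_iff_forall_lintegral_tendsto]
  intro f
  -- the test function `p ↦ ∫⁻ f dκ(p)` on `W × S`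
  have G0cont : Continuous fun p : W × S => (κ p).toFiniteMeasure.testAgainstNN f :=
    (ProbabilityMeasure.continuous_testAgainstNN_eval f).comp hκc
  have G0bd : ∀ p : W × S, (κ p).toFiniteMeasure.testAgainstNN f ≤ nndist 0 f := by
    intro p
    rw [← ENNReal.coe_le_coe, FiniteMeasure.testAgainstNN_coe_eq,
      coe_nnreal_ennreal_nndist]
    simpa [measure_univ, mul_one] using
      BoundedContinuousFunction.lintegral_le_edist_mul
        (μ := ((κ p).toFiniteMeasure : Measure T)) (f := f)
  set G : BoundedContinuousFunction (W × S) ℝ≥0 :=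
    ⟨⟨fun p => (κ p).toFiniteMeasure.testAgainstNN f, G0cont⟩,
      ⟨(nndist 0 f : ℝ), fun p q => by
        rw [NNReal.dist_eq]
        have h1 : ((κ p).toFiniteMeasure.testAgainstNN f : ℝ) ≤ (nndist 0 f : ℝ) :=
          NNReal.coe_le_coe.mpr (G0bd p)
        have h2 : ((κ q).toFiniteMeasure.testAgainstNN f : ℝ) ≤ (nndist 0 f : ℝ) :=
          NNReal.coe_le_coe.mpr (G0bd q)
        have h3 : (0 : ℝ) ≤ (κ p).toFiniteMeasure.testAgainstNN f := NNReal.coe_nonneg _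
        have h4 : (0 : ℝ) ≤ (κ q).toFiniteMeasure.testAgainstNN f := NNReal.coe_nonneg _
        rw [abs_sub_le_iff]
        constructor <;> linarith⟩⟩ with hG
  have key := tendsto_lintegral_pair hμ hw G
  have e : ∀ (v : W) (ν : ProbabilityMeasure S),
      (∫⁻ t, f t ∂((pbind ν (fun x => κ (v, x)) (hκm.comp measurable_prodMk_left)) :
        Measure T)) = ∫⁻ x, G (v, x) ∂(ν : Measure S) := by
    intro v ν
    have hbind : ((pbind ν (fun x => κ (v, x)) (hκm.comp measurable_prodMk_left)) :
        Measure T) = (ν : Measure S).bind (fun x => (κ (v, x) : Measure T)) := rfl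
    rw [hbind, Measure.lintegral_bind
      (show Measurable fun x : S => (κ (v, x) : Measure T) from
        hκm.comp measurable_prodMk_left).aemeasurable
      (show Measurable fun t : T => (f t : ℝ≥0∞) from
        measurable_coe_nnreal_ennreal.comp f.continuous.measurable).aemeasurable]
    refine lintegral_congr fun x => ?_
    have : (G (v, x) : ℝ≥0∞) = ∫⁻ t, f t ∂((κ (v, x)).toFiniteMeasure : Measure T) :=
      FiniteMeasure.testAgainstNN_coe_eq
    rw [this]
    rfl
  simp only [e]
  exact key

end AuxLemmas

/-- **Theorem (weak continuity of `q` from weak continuity of `P`, `Q`, and `H`).**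
If the kernels `P` and `Q` are weakly continuous and there is a weakly continuous
stochastic kernel `H` satisfying the disintegration identity (3.4), then the transition
kernel `q` of the COMDP is weakly continuous. -/
theorem qker_weakly_continuous_of_weaklyContinuous_H {X Y A : Type*}
    [MetricSpace X] [SecondCountableTopology X] [MeasurableSpace X] [BorelSpace X]
    [MetricSpace Y] [SecondCountableTopology Y] [MeasurableSpace Y] [BorelSpace Y]
    [MetricSpace A] [SecondCountableTopology A] [MeasurableSpace A] [BorelSpace A]
    (P : X × A → ProbabilityMeasure X) (Q : A × X → ProbabilityMeasure Y)
    (hPmeas : Measurable fun p => (P p : Measure X))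
    (hQmeas : Measurable fun p => (Q p : Measure Y))
    (hPcont : Continuous P) (hQcont : Continuous Q)
    (H : ProbabilityMeasure X × A × Y → ProbabilityMeasure X)
    (hHmeas : Measurable H)
    (hHdis : Disint P Q H)
    (hHcont : Continuous H) :
    ∀ (zs : ℕ → ProbabilityMeasure X) (z : ProbabilityMeasure X) (as : ℕ → A) (a : A),
      Tendsto zs atTop (𝓝 z) → Tendsto as atTop (𝓝 a) →
      ∀ f : BoundedContinuousFunction (ProbabilityMeasure X) ℝ,
        Tendsto (fun n => ∫ ζ, f ζ ∂(qker P Q H (zs n) (as n))) atTop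
          (𝓝 (∫ ζ, f ζ ∂(qker P Q H z a))) := by
  intro zs z as a hz ha f
  haveI : BorelSpace (ProbabilityMeasure X) := ⟨rfl⟩
  -- Step 1: `bind z P(·,a)` is weakly continuous in `(z, a)`.
  set κP : A × X → ProbabilityMeasure X := fun q => P (q.2, q.1) with hκP
  have hκPc : Continuous κP := hPcont.comp (continuous_snd.prodMk continuous_fst)
  have hκPm : Measurable fun q : A × X => (κP q : Measure X) :=
    hPmeas.comp (measurable_snd.prodMk measurable_fst)
  have h1 := tendsto_pbind κP hκPc hκPm hz ha
  -- Step 2: `R'(z,a)` is weakly continuous in `(z, a)`.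
  have h2 := tendsto_pbind Q hQcont hQmeas h1 ha
  -- Step 3: rewrite the integrals against `qker` as integrals against `R'`.
  have hHm : ∀ (z' : ProbabilityMeasure X) (a' : A),
      Measurable fun y : Y => H (z', a', y) :=
    fun z' a' => hHmeas.comp (measurable_const.prodMk (measurable_const.prodMk measurable_id))
  have hre : ∀ (z' : ProbabilityMeasure X) (a' : A),
      ∫ ζ, f ζ ∂(qker P Q H z' a') = ∫ y, f (H (z', a', y)) ∂(RprimeM P Q z' a') := by
    intro z' a'
    exact integral_map (hHm z' a').aemeasurable f.continuous.aestronglyMeasurable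
  simp only [hre]
  -- Step 4: conclude with the key lemma on `W × Y` with `W = P(X) × A`.
  set φ : C((ProbabilityMeasure X × A) × Y, ProbabilityMeasure X) :=
    ⟨fun p => H (p.1.1, p.1.2, p.2),
      hHcont.comp ((continuous_fst.comp continuous_fst).prodMk
        ((continuous_snd.comp continuous_fst).prodMk continuous_snd))⟩ with hφ
  have key := tendsto_integral_pair (W := ProbabilityMeasure X × A)
    h2 (hz.prodMk_nhds ha) (f.compContinuous φ)
  exact key
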